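/- arXiv:0810.0396 — 2 statements merged into one kernel-verified Lean document; each statement's English description precedes it below -/
import Mathlib

section
/- Let ρ = e^{iπ/3} and let r ≥ 1 be an integer. Then Σ_{n=1}^{∞} (ρ^n + ρ̄^n)/n^{r+1} = (1 − 2^{−r})(1 − 3^{−r}) · ζ(r+1); equivalently, ζ(r+1) = (L_{r+1}(ρ) + L_{r+1}(ρ̄)) / ((1 − 2^{−r})(1 − 3^{−r})), where L_{r+1}(z) = Σ_{n≥1} z^n/n^{r+1}. -/
/-- `ζ(s) = Σ_{n ≥ 1} 1/n^s`. -/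
noncomputable def zr (s : ℕ) : ℂ := ∑' n : ℕ, (((n : ℂ) + 1) ^ s)⁻¹

/-- The polylogarithm `L_s(z) = Σ_{n ≥ 1} z^n/n^s`. -/
noncomputable def Lr (s : ℕ) (z : ℂ) : ℂ := ∑' n : ℕ, z ^ (n + 1) / ((n : ℂ) + 1) ^ s

/-- `ρ = e^{iπ/3}`. -/
noncomputable def rho : ℂ := Complex.exp (Real.pi * Complex.I / 3)

open Complex in
lemma rho_eq : rho = Complex.exp ((Real.pi/3 : ℝ) * I) := by
  rw [rho]; push_cast; ring_nf

lemma rho_re : rho.re = 1/2 := by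
  rw [rho_eq, Complex.exp_ofReal_mul_I_re, Real.cos_pi_div_three]

lemma rho_norm : ‖rho‖ = 1 := by
  rw [rho_eq]
  exact Complex.norm_exp_ofReal_mul_I _

lemma rho_conj : (starRingEnd ℂ) rho = 1 - rho := by
  have h := Complex.add_conj rho
  rw [rho_re] at h
  push_cast at h
  linear_combination h

lemma rho_cube : rho ^ 3 = -1 := by
  rw [rho_eq, ← Complex.exp_nat_mul, ← Complex.exp_pi_mul_I]
  congr 1
  push_cast
  ring

lemma rho_sq : rho ^ 2 = rho - 1 := by
  have h3 := rho_cube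
  have hne : rho + 1 ≠ 0 := by
    intro h
    have h' := congrArg Complex.re h
    simp at h'
    rw [rho_re] at h'; norm_num at h'
  have hfact : (rho + 1) * (rho ^ 2 - rho + 1) = 0 := by linear_combination h3
  have := (mul_eq_zero.mp hfact).resolve_left hne
  linear_combination this

lemma rho_six : rho ^ 6 = 1 := by
  have : rho ^ 6 = (rho ^ 3) ^ 2 := by ring
  rw [this, rho_cube]; ring

lemma key_val (n : ℕ) : rho ^ n + ((1 : ℂ) - rho) ^ n =
    (1 : ℂ) - (if 2 ∣ n then 2 else 0) - (if 3 ∣ n then 3 else 0)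
      + (if 6 ∣ n then 6 else 0) := by
  obtain ⟨q, m, hm, rfl⟩ : ∃ q m, m < 6 ∧ n = 6*q + m :=
    ⟨n/6, n%6, Nat.mod_lt _ (by norm_num), by omega⟩
  have h2 := rho_sq
  have hsig : ((1 : ℂ) - rho) ^ 6 = 1 := by
    linear_combination (rho^4 - 5*rho^3 + 9*rho^2 - 6*rho) * h2
  have hpow : ∀ z : ℂ, z ^ 6 = 1 → z ^ (6*q+m) = z ^ m := by
    intro z hz
    rw [pow_add, pow_mul, hz, one_pow, one_mul]
  rw [hpow rho rho_six, hpow _ hsig]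
  have h2d : (2 ∣ 6*q+m) ↔ 2 ∣ m := by omega
  have h3d : (3 ∣ 6*q+m) ↔ 3 ∣ m := by omega
  have h6d : (6 ∣ 6*q+m) ↔ 6 ∣ m := by omega
  rw [if_congr h2d rfl rfl, if_congr h3d rfl rfl, if_congr h6d rfl rfl]
  interval_cases m
  · norm_num
  · norm_num
  · norm_num; linear_combination 2*h2
  · norm_num; linear_combination 3*h2
  · norm_num; linear_combination (2*rho^2 - 2*rho + 2)*h2
  · norm_num; linear_combination (5*rho^2 - 5*rho)*h2

/-- For `r ≥ 1`: `Σ_{n≥1} (ρⁿ + ρ̄ⁿ)/n^{r+1} = (1 - 2^{-r})(1 - 3^{-r}) ζ(r+1)`;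
equivalently `ζ(r+1) = (L_{r+1}(ρ) + L_{r+1}(ρ̄)) / ((1 - 2^{-r})(1 - 3^{-r}))`. -/
theorem statement17 (r : ℕ) (hr : 1 ≤ r) :
    (∑' n : ℕ, (rho ^ (n + 1) + (starRingEnd ℂ) rho ^ (n + 1)) / ((n : ℂ) + 1) ^ (r + 1))
        = (1 - (2 : ℂ) ^ (-(r : ℤ))) * (1 - (3 : ℂ) ^ (-(r : ℤ))) * zr (r + 1) ∧
    zr (r + 1) = (Lr (r + 1) rho + Lr (r + 1) ((starRingEnd ℂ) rho)) /
        ((1 - (2 : ℂ) ^ (-(r : ℤ))) * (1 - (3 : ℂ) ^ (-(r : ℤ)))) := by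
  set s := r + 1 with hs
  set g : ℕ → ℂ := fun n => if n = 0 then 0 else ((n : ℂ) ^ s)⁻¹ with hgdef
  have hg0 : g 0 = 0 := by simp [hgdef]
  have hgn : ∀ n : ℕ, g (n+1) = (((n:ℂ)+1) ^ s)⁻¹ := by
    intro n
    simp only [hgdef, Nat.succ_ne_zero, if_false]
    push_cast
    ring_nf
  have hsum_base : Summable (fun n : ℕ => ((n : ℝ) ^ s)⁻¹) :=
    Real.summable_nat_pow_inv.mpr (by omega)
  have hg : Summable g := by
    apply Summable.of_norm
    apply hsum_base.of_nonneg_of_le (fun n => norm_nonneg _)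
    intro n
    by_cases h : n = 0 <;> simp [hgdef, h]
  have hmul : ∀ k : ℕ, k ≠ 0 → ∀ n : ℕ, g (k * n) = (((k:ℕ) : ℂ) ^ s)⁻¹ * g n := by
    intro k hk n
    by_cases h : n = 0
    · simp [h, hgdef]
    · have hkn : k * n ≠ 0 := by positivity
      simp only [hgdef, if_neg h, if_neg hkn]
      push_cast
      rw [mul_pow, mul_inv]
  have hshift : ∀ f : ℕ → ℂ, Summable f → f 0 = 0 → ∑' n, f (n+1) = ∑' n, f n := by
    intro f hf h0
    rw [Summable.tsum_eq_zero_add hf, h0, zero_add]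
  have hind : ∀ k : ℕ, Summable (fun n => if k ∣ n then g n else 0) := by
    intro k
    apply Summable.of_norm
    apply hg.norm.of_nonneg_of_le (fun n => norm_nonneg _)
    intro n
    by_cases h : k ∣ n <;> simp [h]
  have htsum_ind : ∀ k : ℕ, k ≠ 0 →
      (∑' n, if k ∣ n then g n else 0) = (((k:ℕ) : ℂ) ^ s)⁻¹ * ∑' n, g n := by
    intro k hk
    have hinj : Function.Injective (fun n : ℕ => k * n) := fun a b h => by
      simpa [hk] using h
    have hsupp : Function.support (fun n => if k ∣ n then g n else 0)
        ⊆ Set.range (fun n : ℕ => k * n) := by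
      intro x hx
      simp only [Function.mem_support, ne_eq] at hx
      by_cases h : k ∣ x
      · obtain ⟨c, hc⟩ := h; exact ⟨c, hc.symm⟩
      · simp [h] at hx
    calc (∑' n, if k ∣ n then g n else 0)
        = ∑' n, (if k ∣ k*n then g (k*n) else 0) := (hinj.tsum_eq hsupp).symm
      _ = ∑' n, (((k:ℕ) : ℂ) ^ s)⁻¹ * g n :=
          tsum_congr (fun n => by rw [if_pos (dvd_mul_right k n), hmul k hk n])
      _ = (((k:ℕ) : ℂ) ^ s)⁻¹ * ∑' n, g n := tsum_mul_left
  have hzr : zr s = ∑' n, g n := by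
    rw [← hshift g hg hg0, zr]
    exact tsum_congr (fun n => (hgn n).symm)
  have hcoef : ∀ n : ℕ,
      (rho ^ n + (starRingEnd ℂ) rho ^ n) * g n
        = g n - 2 * (if 2 ∣ n then g n else 0) - 3 * (if 3 ∣ n then g n else 0)
          + 6 * (if 6 ∣ n then g n else 0) := by
    intro n
    rw [rho_conj, key_val n]
    by_cases h2 : 2 ∣ n <;> by_cases h3 : 3 ∣ n <;>
      by_cases h6 : 6 ∣ n <;> simp only [h2, h3, h6, if_true, if_false] <;> ring
  have hcsum : Summable (fun n => (rho ^ n + (starRingEnd ℂ) rho ^ n) * g n) := by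
    apply Summable.of_norm
    apply (hg.norm.mul_left 2).of_nonneg_of_le (fun n => norm_nonneg _)
    intro n
    rw [norm_mul]
    gcongr
    calc ‖rho ^ n + (starRingEnd ℂ) rho ^ n‖ ≤ ‖rho ^ n‖ + ‖(starRingEnd ℂ) rho ^ n‖ :=
          norm_add_le _ _
      _ ≤ 2 := by
          rw [norm_pow, norm_pow, RCLike.norm_conj, rho_norm]
          norm_num
  have hk2 : (((2:ℕ):ℂ) ^ s)⁻¹ = (2 : ℂ) ^ (-(r : ℤ)) * (2 : ℂ)⁻¹ := by
    push_cast
    rw [hs, zpow_neg, zpow_natCast, pow_succ, mul_inv]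
  have hk3 : (((3:ℕ):ℂ) ^ s)⁻¹ = (3 : ℂ) ^ (-(r : ℤ)) * (3 : ℂ)⁻¹ := by
    push_cast
    rw [hs, zpow_neg, zpow_natCast, pow_succ, mul_inv]
  have hk6 : (((6:ℕ):ℂ) ^ s)⁻¹ = (((2:ℕ):ℂ) ^ s)⁻¹ * (((3:ℕ):ℂ) ^ s)⁻¹ := by
    push_cast
    rw [← mul_inv, ← mul_pow]
    norm_num
  have hmain : (∑' n, (rho ^ n + (starRingEnd ℂ) rho ^ n) * g n)
      = (1 - (2 : ℂ) ^ (-(r : ℤ))) * (1 - (3 : ℂ) ^ (-(r : ℤ))) * ∑' n, g n := by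
    calc (∑' n, (rho ^ n + (starRingEnd ℂ) rho ^ n) * g n)
        = ∑' n, (g n - 2 * (if 2 ∣ n then g n else 0) - 3 * (if 3 ∣ n then g n else 0)
          + 6 * (if 6 ∣ n then g n else 0)) := tsum_congr hcoef
      _ = (∑' n, g n) - 2 * (∑' n, if 2 ∣ n then g n else 0)
            - 3 * (∑' n, if 3 ∣ n then g n else 0)
            + 6 * (∑' n, if 6 ∣ n then g n else 0) := by
          rw [Summable.tsum_add ((hg.sub ((hind 2).mul_left 2)).sub ((hind 3).mul_left 3))
            ((hind 6).mul_left 6),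
            Summable.tsum_sub (hg.sub ((hind 2).mul_left 2)) ((hind 3).mul_left 3),
            Summable.tsum_sub hg ((hind 2).mul_left 2), tsum_mul_left, tsum_mul_left,
            tsum_mul_left]
      _ = (1 - (2 : ℂ) ^ (-(r : ℤ))) * (1 - (3 : ℂ) ^ (-(r : ℤ))) * ∑' n, g n := by
          rw [htsum_ind 2 (by norm_num), htsum_ind 3 (by norm_num),
            htsum_ind 6 (by norm_num), hk6, hk2, hk3]
          ring
  have hfirst : (∑' n : ℕ, (rho ^ (n + 1) + (starRingEnd ℂ) rho ^ (n + 1)) / ((n : ℂ) + 1) ^ s)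
      = (1 - (2 : ℂ) ^ (-(r : ℤ))) * (1 - (3 : ℂ) ^ (-(r : ℤ))) * zr s := by
    have h1 : (∑' n : ℕ, (rho ^ (n + 1) + (starRingEnd ℂ) rho ^ (n + 1)) / ((n : ℂ) + 1) ^ s)
        = ∑' n, (rho ^ (n+1) + (starRingEnd ℂ) rho ^ (n+1)) * g (n+1) := by
      apply tsum_congr
      intro n
      rw [hgn n, div_eq_mul_inv]
    rw [h1, hshift _ hcsum (by simp [hg0]), hmain, hzr]
  refine ⟨hfirst, ?_⟩
  have hsum1 : Summable (fun n : ℕ => (((n:ℝ)+1) ^ s)⁻¹) := by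
    apply ((summable_nat_add_iff 1).mpr hsum_base).congr
    intro n
    push_cast
    ring
  have hLsum : ∀ z : ℂ, ‖z‖ = 1 → Summable (fun n : ℕ => z ^ (n+1) / ((n:ℂ)+1) ^ s) := by
    intro z hz
    apply Summable.of_norm
    apply hsum1.of_nonneg_of_le (fun n => norm_nonneg _)
    intro n
    have hn : ‖(n:ℂ)+1‖ = (n:ℝ)+1 := by
      rw [show ((n:ℂ)+1) = (((n+1:ℕ)):ℂ) by push_cast; ring, Complex.norm_natCast]
      push_cast; ring
    rw [norm_div, norm_pow, hz, one_pow, norm_pow, hn]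
    rw [one_div]
  have habsc : ‖(starRingEnd ℂ) rho‖ = 1 := by rw [RCLike.norm_conj, rho_norm]
  have hLadd : Lr s rho + Lr s ((starRingEnd ℂ) rho)
      = ∑' n : ℕ, (rho ^ (n + 1) + (starRingEnd ℂ) rho ^ (n + 1)) / ((n : ℂ) + 1) ^ s := by
    rw [Lr, Lr, ← Summable.tsum_add (hLsum rho rho_norm) (hLsum _ habsc)]
    exact tsum_congr (fun n => (add_div _ _ _).symm)
  have hD2 : (1 : ℂ) - (2 : ℂ) ^ (-(r : ℤ)) ≠ 0 := by
    rw [sub_ne_zero]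
    intro h
    have h' := congrArg norm h
    rw [norm_one, norm_zpow, Complex.norm_ofNat] at h'
    have h2 : (2:ℝ) ^ (-(r:ℤ)) < 1 := by
      apply zpow_lt_one_of_neg₀ (by norm_num)
      omega
    rw [← h'] at h2
    exact lt_irrefl _ h2
  have hD3 : (1 : ℂ) - (3 : ℂ) ^ (-(r : ℤ)) ≠ 0 := by
    rw [sub_ne_zero]
    intro h
    have h' := congrArg norm h
    rw [norm_one, norm_zpow, Complex.norm_ofNat] at h'
    have h2 : (3:ℝ) ^ (-(r:ℤ)) < 1 := by
      apply zpow_lt_one_of_neg₀ (by norm_num)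
      omega
    rw [← h'] at h2
    exact lt_irrefl _ h2
  rw [hLadd, hfirst]
  exact (mul_div_cancel_left₀ _ (mul_ne_zero hD2 hD3)).symm
end

section
/- Let Z be the ℚ-linear subspace of ℝ spanned by 1 together with all multiple zeta values ζ(r_1,…,r_k) (for all k ≥ 1 and positive integers r_1,…,r_k with r_k ≥ 2). Then Z is a subring of ℝ, and the ℚ-subalgebra of ℂ generated by Z and iπ equals Z + iπZ; moreover this sum is direct, i.e. Z ∩ iπZ = {0}. -/
/-- The multiple zeta value `ζ(r₁,…,r_k) = Σ_{0<n₁<⋯<n_k} 1/(n₁^{r₁}⋯n_k^{r_k})`,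
as a sum over strictly increasing `k`-tuples of positive integers. -/
noncomputable def mzv (r : List ℕ) : ℝ :=
  ∑' n : {f : Fin r.length → ℕ // StrictMono f ∧ ∀ i, 0 < f i},
    ∏ i, ((n.1 i : ℝ) ^ r.get i)⁻¹

/-- The set consisting of `1` together with all multiple zeta values
`ζ(r₁,…,r_k)` with `k ≥ 1`, each `r_i ≥ 1` and `r_k ≥ 2`. -/
def MZVSet : Set ℝ :=
  {1} ∪ {x | ∃ r : List ℕ, r ≠ [] ∧ (∀ m ∈ r, 0 < m) ∧
    (∃ l, r.getLast? = some l ∧ 2 ≤ l) ∧ x = mzv r}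

/-- `Z`: the `ℚ`-linear span in `ℝ` of `1` and all multiple zeta values. -/
noncomputable def Zspan : Submodule ℚ ℝ := Submodule.span ℚ MZVSet

open scoped ENNReal

noncomputable def ZE : List ℕ → ℕ → ℝ≥0∞
  | [], _ => 1
  | a :: r, n => ∑' m : ℕ, if n < m then ((m : ℝ≥0∞) ^ a)⁻¹ * ZE r m else 0

lemma ZE_nil (n : ℕ) : ZE [] n = 1 := rfl
lemma ZE_cons (a : ℕ) (r : List ℕ) (n : ℕ) :
    ZE (a :: r) n = ∑' m : ℕ, if n < m then ((m : ℝ≥0∞) ^ a)⁻¹ * ZE r m else 0 := rfl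

lemma cons_cond (n m : ℕ) {k : ℕ} (g : Fin k → ℕ) :
    (StrictMono (Fin.cons m g : Fin (k+1) → ℕ) ∧
        ∀ i, n < (Fin.cons m g : Fin (k+1) → ℕ) i) ↔
      (n < m ∧ (StrictMono g ∧ ∀ i, m < g i)) := by
  constructor
  · rintro ⟨h1, h2⟩
    have hg : ∀ i : Fin k, m < g i := by
      intro i
      have := h1 (show (0 : Fin (k+1)) < i.succ from Fin.succ_pos i)
      simpa using this
    refine ⟨by simpa using h2 0, ?_, hg⟩
    intro i j hij
    have := h1 (show i.succ < j.succ by simpa using hij)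
    simpa using this
  · rintro ⟨hn, hg, hm⟩
    constructor
    · intro i j hij
      induction j using Fin.cases with
      | zero => exact absurd hij (by simp)
      | succ j' =>
        induction i using Fin.cases with
        | zero => simpa using hm j'
        | succ i' =>
          simp only [Fin.cons_succ]
          exact hg (by simpa using hij)
    · intro i
      induction i using Fin.cases with
      | zero => simpa using hn
      | succ i' => simpa using lt_trans hn (hm i')

open Classical in
lemma ZE_eq (r : List ℕ) (n : ℕ) :
    ZE r n = ∑' f : Fin r.length → ℕ,
      if (StrictMono f ∧ ∀ i, n < f i)
      then ∏ i, ((f i : ℝ≥0∞) ^ r.get i)⁻¹ else 0 := by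
  induction r generalizing n with
  | nil =>
    rw [ZE_nil]
    rw [tsum_eq_single (fun i => i.elim0)]
    · rw [if_pos]
      · simp
      · exact ⟨fun a => a.elim0, fun i => i.elim0⟩
    · intro f hf
      exact absurd (funext fun i => i.elim0) (Ne.symm hf)
  | cons a r ih =>
    rw [ZE_cons]
    show _ = ∑' f : Fin (r.length + 1) → ℕ,
      if (StrictMono f ∧ ∀ i, n < f i)
      then ∏ i, ((f i : ℝ≥0∞) ^ (a :: r).get i)⁻¹ else 0
    rw [← (Fin.consEquiv (fun _ : Fin (r.length + 1) => ℕ)).tsum_eq, ENNReal.tsum_prod']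
    refine tsum_congr fun m => ?_
    have key : ∀ g : Fin r.length → ℕ,
        (if (StrictMono (Fin.cons m g : Fin (r.length+1) → ℕ) ∧
            ∀ i, n < (Fin.cons m g : Fin (r.length+1) → ℕ) i)
          then ∏ i : Fin (r.length+1),
            (((Fin.cons m g : Fin (r.length+1) → ℕ) i : ℝ≥0∞) ^ (a :: r).get i)⁻¹ else 0)
        = (if (n < m ∧ (StrictMono g ∧ ∀ i, m < g i))
            then ((m : ℝ≥0∞) ^ a)⁻¹ * ∏ i : Fin r.length, ((g i : ℝ≥0∞) ^ r.get i)⁻¹ else 0) := by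
      intro g
      rw [if_congr (cons_cond n m g) rfl rfl]
      congr 1
      rw [Fin.prod_univ_succ]
      simp
    calc (if n < m then ((m : ℝ≥0∞) ^ a)⁻¹ * ZE r m else 0)
        = ∑' g : Fin r.length → ℕ,
            if (n < m ∧ (StrictMono g ∧ ∀ i, m < g i))
            then ((m : ℝ≥0∞) ^ a)⁻¹ * ∏ i : Fin r.length, ((g i : ℝ≥0∞) ^ r.get i)⁻¹ else 0 := by
          by_cases h : n < m
          · rw [if_pos h, ih, ← ENNReal.tsum_mul_left]
            refine tsum_congr fun g => ?_
            simp [h, mul_ite]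
          · rw [if_neg h]
            symm
            rw [← tsum_zero]
            refine tsum_congr fun g => ?_
            simp [h]
      _ = _ := by
          refine tsum_congr fun g => ?_
          rw [← key g]
          rfl

open Classical in
lemma ZE_key (a b : ℕ) (r s : List ℕ) (n : ℕ) :
    ZE (a::r) n * ZE (b::s) n
      = ∑' m : ℕ, if n < m then
          (((m:ℝ≥0∞)^a)⁻¹ * (ZE r m * ZE (b::s) m) +
           ((m:ℝ≥0∞)^b)⁻¹ * (ZE (a::r) m * ZE s m) +
           ((m:ℝ≥0∞)^(a+b))⁻¹ * (ZE r m * ZE s m)) else 0 := by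
  set F : ℕ → ℝ≥0∞ := fun m => if n < m then ((m:ℝ≥0∞)^a)⁻¹ * ZE r m else 0 with hF
  set G : ℕ → ℝ≥0∞ := fun m => if n < m then ((m:ℝ≥0∞)^b)⁻¹ * ZE s m else 0 with hG
  have hFG : ZE (a::r) n * ZE (b::s) n = ∑' p : ℕ × ℕ, F p.1 * G p.2 := by
    rw [ZE_cons, ZE_cons, ENNReal.tsum_prod']
    rw [← ENNReal.tsum_mul_right]
    exact tsum_congr fun m => (ENNReal.tsum_mul_left).symm
  rw [hFG]
  have hsplit : ∀ p : ℕ × ℕ, F p.1 * G p.2 =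
      (if p.1 < p.2 then F p.1 * G p.2 else 0) +
      (if p.2 < p.1 then F p.1 * G p.2 else 0) +
      (if p.1 = p.2 then F p.1 * G p.2 else 0) := by
    intro p
    rcases lt_trichotomy p.1 p.2 with h | h | h
    · simp [h, lt_irrefl, not_lt_of_gt h, ne_of_lt h]
    · simp [h, lt_irrefl]
    · simp [h, lt_irrefl, not_lt_of_gt h, (ne_of_lt h).symm, not_lt_of_gt h]
  rw [tsum_congr hsplit, ENNReal.tsum_add, ENNReal.tsum_add]
  have hS1 : (∑' p : ℕ × ℕ, if p.1 < p.2 then F p.1 * G p.2 else 0)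
      = ∑' m, if n < m then ((m:ℝ≥0∞)^a)⁻¹ * (ZE r m * ZE (b::s) m) else 0 := by
    rw [ENNReal.tsum_prod']
    refine tsum_congr fun m => ?_
    by_cases h : n < m
    · have : ∀ m' : ℕ, (if m < m' then F m * G m' else 0)
          = F m * (if m < m' then ((m':ℝ≥0∞)^b)⁻¹ * ZE s m' else 0) := by
        intro m'
        by_cases h' : m < m'
        · rw [if_pos h', if_pos h']
          simp only [hG]
          rw [if_pos (lt_trans h h')]
        · simp [h']
      rw [tsum_congr this, ENNReal.tsum_mul_left, ← ZE_cons, if_pos h]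
      simp only [hF]
      rw [if_pos h, mul_assoc]
    · have : ∀ m' : ℕ, (if m < m' then F m * G m' else 0) = 0 := by
        intro m'
        by_cases h' : m < m'
        · rw [if_pos h']
          simp only [hF]
          rw [if_neg h, zero_mul]
        · rw [if_neg h']
      rw [tsum_congr this, tsum_zero, if_neg h]
  have hS2 : (∑' p : ℕ × ℕ, if p.2 < p.1 then F p.1 * G p.2 else 0)
      = ∑' m, if n < m then ((m:ℝ≥0∞)^b)⁻¹ * (ZE (a::r) m * ZE s m) else 0 := by
    rw [ENNReal.tsum_prod', ENNReal.tsum_comm]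
    refine tsum_congr fun m' => ?_
    by_cases h : n < m'
    · have : ∀ m : ℕ, (if m' < m then F m * G m' else 0)
          = G m' * (if m' < m then ((m:ℝ≥0∞)^a)⁻¹ * ZE r m else 0) := by
        intro m
        by_cases h' : m' < m
        · rw [if_pos h', if_pos h']
          simp only [hF]
          rw [if_pos (lt_trans h h'), mul_comm]
        · simp [h']
      rw [tsum_congr this, ENNReal.tsum_mul_left, ← ZE_cons, if_pos h]
      simp only [hG]
      rw [if_pos h, mul_assoc, mul_comm (ZE s m') (ZE (a::r) m')]
    · have : ∀ m : ℕ, (if m' < m then F m * G m' else 0) = 0 := by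
        intro m
        by_cases h' : m' < m
        · rw [if_pos h']
          simp only [hG]
          rw [if_neg h, mul_zero]
        · rw [if_neg h']
      rw [tsum_congr this, tsum_zero, if_neg h]
  have hS3 : (∑' p : ℕ × ℕ, if p.1 = p.2 then F p.1 * G p.2 else 0)
      = ∑' m, if n < m then ((m:ℝ≥0∞)^(a+b))⁻¹ * (ZE r m * ZE s m) else 0 := by
    rw [ENNReal.tsum_prod']
    refine tsum_congr fun m => ?_
    rw [tsum_eq_single m (fun m' hm' => by rw [if_neg (Ne.symm hm')])]
    rw [if_pos rfl]
    simp only [hF, hG]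
    by_cases h : n < m
    · rw [if_pos h, if_pos h, if_pos h]
      have hm : (m:ℝ≥0∞) ≠ ⊤ := ENNReal.natCast_ne_top m
      rw [pow_add, ENNReal.mul_inv (Or.inr (ENNReal.pow_ne_top hm)) (Or.inl (ENNReal.pow_ne_top hm))]
      ring
    · simp [h]
  rw [hS1, hS2, hS3, ← ENNReal.tsum_add, ← ENNReal.tsum_add]
  refine tsum_congr fun m => ?_
  by_cases h : n < m <;> simp [h]

def stuffles : List ℕ → List ℕ → List (List ℕ)
  | [], s => [s]
  | a :: r, [] => [a :: r]
  | a :: r, b :: s =>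
      ((stuffles r (b :: s)).map (fun t => a :: t)) ++
      ((stuffles (a :: r) s).map (fun t => b :: t)) ++
      ((stuffles r s).map (fun t => (a + b) :: t))
termination_by r s => r.length + s.length
decreasing_by all_goals (simp [List.length_cons]; try omega)

lemma tsum_list_sum {α : Type*} (l : List α) (H : ℕ → α → ℝ≥0∞) :
    ((l.map (fun t => ∑' m, H m t)).sum) = ∑' m, (l.map (H m)).sum := by
  induction l with
  | nil => simp
  | cons t l ih => simp [ih, ENNReal.tsum_add]

lemma map_ite_mul_sum {α : Type*} (l : List α) (P : Prop) [Decidable P] (d : ℝ≥0∞)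
    (f : α → ℝ≥0∞) :
    (l.map (fun t => if P then d * f t else 0)).sum
      = if P then d * (l.map f).sum else 0 := by
  by_cases h : P
  · simp only [h, if_true]
    induction l with
    | nil => simp
    | cons t l ih => simp [ih, mul_add]
  · simp [h]

open Classical in
lemma stuffle_piece (l : List (List ℕ)) (c n : ℕ) :
    ((l.map (fun t => ZE (c :: t) n)).sum)
      = ∑' m : ℕ, if n < m then ((m:ℝ≥0∞)^c)⁻¹ * (l.map (fun t => ZE t m)).sum else 0 := by
  have h1 : (fun t => ZE (c :: t) n)
      = fun t => ∑' m : ℕ, if n < m then ((m:ℝ≥0∞)^c)⁻¹ * ZE t m else 0 :=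
    funext fun t => ZE_cons c t n
  rw [h1, tsum_list_sum l (fun m t => if n < m then ((m:ℝ≥0∞)^c)⁻¹ * ZE t m else 0)]
  refine tsum_congr fun m => ?_
  rw [map_ite_mul_sum]

lemma ZE_stuffle_aux (N : ℕ) : ∀ (r s : List ℕ), r.length + s.length ≤ N → ∀ n,
    ZE r n * ZE s n = ((stuffles r s).map (fun t => ZE t n)).sum := by
  induction N with
  | zero =>
    intro r s h n
    have hr : r = [] := List.length_eq_zero_iff.1 (by omega)
    have hs : s = [] := List.length_eq_zero_iff.1 (by omega)
    subst hr; subst hs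
    simp [stuffles, ZE_nil]
  | succ N ih =>
    intro r s hlen n
    match r, s with
    | [], s => simp [stuffles, ZE_nil]
    | a :: r, [] => simp [stuffles, ZE_nil]
    | a :: r, b :: s =>
      rw [ZE_key]
      simp only [stuffles]
      rw [List.map_append, List.map_append, List.sum_append, List.sum_append,
        List.map_map, List.map_map, List.map_map]
      simp only [Function.comp_def]
      rw [stuffle_piece, stuffle_piece, stuffle_piece]
      rw [← ENNReal.tsum_add, ← ENNReal.tsum_add]
      refine tsum_congr fun m => ?_
      have h1 : r.length + (b :: s).length ≤ N := by simp at hlen ⊢; omega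
      have h2 : (a :: r).length + s.length ≤ N := by simp at hlen ⊢; omega
      have h3 : r.length + s.length ≤ N := by simp at hlen ⊢; omega
      by_cases h : n < m
      · simp only [h, if_true]
        rw [ih r (b :: s) h1 m, ih (a :: r) s h2 m, ih r s h3 m]
      · simp [h]

lemma inv_telescope {M : ℕ} (hM : 1 ≤ M) :
    ((M:ℝ≥0∞))⁻¹ * ((M:ℝ≥0∞)+1)⁻¹ + ((M:ℝ≥0∞)+1)⁻¹ = (M:ℝ≥0∞)⁻¹ := by
  set x : ℝ≥0∞ := (M:ℝ≥0∞) with hx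
  have hx0 : x ≠ 0 := by
    simp [hx]; omega
  have hxt : x ≠ ⊤ := by simp [hx]
  have hx10 : x + 1 ≠ 0 := by simp
  have hx1t : x + 1 ≠ ⊤ := by simp [hxt]
  calc x⁻¹ * (x+1)⁻¹ + (x+1)⁻¹ = (x⁻¹ + 1) * (x+1)⁻¹ := by ring
    _ = (x⁻¹ * (x + 1)) * (x+1)⁻¹ := by
        rw [mul_add, mul_one, ENNReal.inv_mul_cancel hx0 hxt, add_comm]
    _ = x⁻¹ * ((x + 1) * (x+1)⁻¹) := by rw [mul_assoc]
    _ = x⁻¹ := by rw [ENNReal.mul_inv_cancel hx10 hx1t, mul_one]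

lemma Ico_bound (n : ℕ) : ∀ M, n + 1 ≤ M →
    (∑ m ∈ Finset.Ico (n+1) M, ((m:ℝ≥0∞))⁻¹ * ((m:ℝ≥0∞)+1)⁻¹) + (M:ℝ≥0∞)⁻¹
      ≤ ((n:ℝ≥0∞)+1)⁻¹ := by
  refine Nat.le_induction ?_ ?_
  · simp [Nat.cast_add]
  · intro M hM ih
    rw [Finset.sum_Ico_succ_top hM]
    have : ((M+1:ℕ):ℝ≥0∞) = (M:ℝ≥0∞) + 1 := by push_cast; rfl
    rw [this, add_assoc, inv_telescope (by omega)]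
    exact ih

open Classical in
lemma tele_bound (n : ℕ) :
    (∑' m : ℕ, if n < m then ((m:ℝ≥0∞))⁻¹ * ((m:ℝ≥0∞)+1)⁻¹ else 0) ≤ ((n:ℝ≥0∞)+1)⁻¹ := by
  rw [ENNReal.tsum_eq_iSup_sum]
  refine iSup_le fun s => ?_
  rw [← Finset.sum_filter]
  set M := (s.sup id) + 1 with hM
  calc (∑ m ∈ s.filter (n < ·), ((m:ℝ≥0∞))⁻¹ * ((m:ℝ≥0∞)+1)⁻¹)
      ≤ ∑ m ∈ Finset.Ico (n+1) (max M (n+1)), ((m:ℝ≥0∞))⁻¹ * ((m:ℝ≥0∞)+1)⁻¹ := by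
        refine Finset.sum_le_sum_of_subset fun m hm => ?_
        rw [Finset.mem_filter] at hm
        rw [Finset.mem_Ico]
        have : m ≤ s.sup id := Finset.le_sup (f := id) hm.1
        constructor
        · omega
        · have : m < M := by omega
          omega
    _ ≤ _ := by
        refine le_trans le_self_add (Ico_bound n _ ?_)
        exact le_max_right _ _

lemma ZE_le (r : List ℕ) (hpos : ∀ m ∈ r, 0 < m)
    (hlast : ∃ l, r.getLast? = some l ∧ 2 ≤ l) :
    ∀ n, ZE r n ≤ 2 * ((n:ℝ≥0∞)+1)⁻¹ := by
  induction r with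
  | nil => simp at hlast
  | cons a r ihr =>
    intro n
    have key : ∀ m : ℕ, 0 < m → ((m:ℝ≥0∞))⁻¹ ≤ 2 * ((m:ℝ≥0∞)+1)⁻¹ := by
      intro m hm
      have h2m : ((m:ℝ≥0∞) + 1) ≤ 2 * m := by
        rw [two_mul]
        gcongr
        exact_mod_cast Nat.one_le_cast.2 hm
      calc ((m:ℝ≥0∞))⁻¹ = 2 * (2⁻¹ * (m:ℝ≥0∞)⁻¹) := by
            rw [← mul_assoc, ENNReal.mul_inv_cancel (by norm_num) (by norm_num), one_mul]
        _ = 2 * (2 * (m:ℝ≥0∞))⁻¹ := by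
            rw [ENNReal.mul_inv (by norm_num) (by norm_num)]
        _ ≤ 2 * ((m:ℝ≥0∞)+1)⁻¹ :=
            mul_le_mul_right (ENNReal.inv_le_inv.2 h2m) 2
    cases r with
    | nil =>
      have ha : 2 ≤ a := by
        obtain ⟨l, hl, h2⟩ := hlast
        simp at hl; omega
      rw [ZE_cons]
      calc (∑' m : ℕ, if n < m then ((m:ℝ≥0∞)^a)⁻¹ * ZE [] m else 0)
          ≤ ∑' m : ℕ, 2 * (if n < m then ((m:ℝ≥0∞))⁻¹ * ((m:ℝ≥0∞)+1)⁻¹ else 0) := by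
            refine ENNReal.tsum_le_tsum fun m => ?_
            by_cases h : n < m
            · rw [if_pos h, if_pos h, ZE_nil, mul_one]
              have hm1 : (1:ℝ≥0∞) ≤ (m:ℝ≥0∞) := Nat.one_le_cast.2 (by omega)
              calc ((m:ℝ≥0∞)^a)⁻¹ ≤ ((m:ℝ≥0∞)^2)⁻¹ :=
                    ENNReal.inv_le_inv.2 (pow_le_pow_right' hm1 ha)
                _ = ((m:ℝ≥0∞))⁻¹ * ((m:ℝ≥0∞))⁻¹ := by
                    rw [sq, ENNReal.mul_inv (Or.inl (Nat.cast_ne_zero.2 (by omega)))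
                      (Or.inl (ENNReal.natCast_ne_top m))]
                _ ≤ ((m:ℝ≥0∞))⁻¹ * (2 * ((m:ℝ≥0∞)+1)⁻¹) := by
                    gcongr
                    exact key m (by omega)
                _ = 2 * (((m:ℝ≥0∞))⁻¹ * ((m:ℝ≥0∞)+1)⁻¹) := by ring
            · simp [h]
        _ = 2 * ∑' m : ℕ, (if n < m then ((m:ℝ≥0∞))⁻¹ * ((m:ℝ≥0∞)+1)⁻¹ else 0) :=
            ENNReal.tsum_mul_left
        _ ≤ 2 * ((n:ℝ≥0∞)+1)⁻¹ := mul_le_mul_right (tele_bound n) 2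
    | cons a' r' =>
      have ih : ∀ m, ZE (a' :: r') m ≤ 2 * ((m:ℝ≥0∞)+1)⁻¹ := by
        refine ihr (fun m hm => hpos m (List.mem_cons_of_mem a hm)) ?_
        obtain ⟨l, hl, h2⟩ := hlast
        exact ⟨l, by rwa [List.getLast?_cons_cons] at hl, h2⟩
      have ha : 1 ≤ a := hpos a (List.mem_cons_self)
      rw [ZE_cons]
      calc (∑' m : ℕ, if n < m then ((m:ℝ≥0∞)^a)⁻¹ * ZE (a' :: r') m else 0)
          ≤ ∑' m : ℕ, 2 * (if n < m then ((m:ℝ≥0∞))⁻¹ * ((m:ℝ≥0∞)+1)⁻¹ else 0) := by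
            refine ENNReal.tsum_le_tsum fun m => ?_
            by_cases h : n < m
            · rw [if_pos h, if_pos h]
              have hm1 : (1:ℝ≥0∞) ≤ (m:ℝ≥0∞) := Nat.one_le_cast.2 (by omega)
              calc ((m:ℝ≥0∞)^a)⁻¹ * ZE (a' :: r') m
                  ≤ ((m:ℝ≥0∞)^1)⁻¹ * (2 * ((m:ℝ≥0∞)+1)⁻¹) := by
                    exact mul_le_mul' (ENNReal.inv_le_inv.2 (pow_le_pow_right' hm1 ha)) (ih m)
                _ = 2 * (((m:ℝ≥0∞))⁻¹ * ((m:ℝ≥0∞)+1)⁻¹) := by rw [pow_one]; ring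
            · simp [h]
        _ = 2 * ∑' m : ℕ, (if n < m then ((m:ℝ≥0∞))⁻¹ * ((m:ℝ≥0∞)+1)⁻¹ else 0) :=
            ENNReal.tsum_mul_left
        _ ≤ 2 * ((n:ℝ≥0∞)+1)⁻¹ := mul_le_mul_right (tele_bound n) 2

lemma ZE_ne_top (r : List ℕ) (hpos : ∀ m ∈ r, 0 < m)
    (hlast : ∃ l, r.getLast? = some l ∧ 2 ≤ l) (n : ℕ) : ZE r n ≠ ⊤ := by
  refine ne_top_of_le_ne_top ?_ (ZE_le r hpos hlast n)
  exact ENNReal.mul_ne_top (by norm_num) (ENNReal.inv_ne_top.2 (by simp))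

lemma getLast?_cons_ne {t : List ℕ} (c : ℕ) (h : t ≠ []) :
    (c :: t).getLast? = t.getLast? := by
  cases t with
  | nil => exact absurd rfl h
  | cons d t' => rw [List.getLast?_cons_cons]

def Valid (r : List ℕ) : Prop :=
  r ≠ [] ∧ (∀ m ∈ r, 0 < m) ∧ (∃ l, r.getLast? = some l ∧ 2 ≤ l)

lemma stuffles_valid_aux (N : ℕ) : ∀ r s : List ℕ, r.length + s.length ≤ N →
    (∀ m ∈ r, 0 < m) → (∀ m ∈ s, 0 < m) →
    (r ≠ [] → ∃ l, r.getLast? = some l ∧ 2 ≤ l) →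
    (s ≠ [] → ∃ l, s.getLast? = some l ∧ 2 ≤ l) →
    (r ≠ [] ∨ s ≠ []) →
    ∀ t ∈ stuffles r s, Valid t := by
  induction N with
  | zero =>
    intro r s h _ _ _ _ hor _ _
    have hr : r = [] := List.length_eq_zero_iff.1 (by omega)
    have hs : s = [] := List.length_eq_zero_iff.1 (by omega)
    rcases hor with h' | h' <;> exact absurd (by assumption) h'
  | succ N ih =>
    intro r s hlen hrpos hspos hrlast hslast hor t ht
    match r, s with
    | [], s =>
      have hs : s ≠ [] := by
        rcases hor with h' | h'
        · exact absurd rfl h'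
        · exact h'
      simp only [stuffles, List.mem_singleton] at ht
      exact ht ▸ ⟨hs, hspos, hslast hs⟩
    | a :: r, [] =>
      simp only [stuffles, List.mem_singleton] at ht
      exact ht ▸ ⟨List.cons_ne_nil a r, hrpos, hrlast (List.cons_ne_nil a r)⟩
    | a :: r, b :: s =>
      have ha : 0 < a := hrpos a (List.mem_cons_self)
      have hb : 0 < b := hspos b (List.mem_cons_self)
      have hrlast' : r ≠ [] → ∃ l, r.getLast? = some l ∧ 2 ≤ l := by
        intro hr
        obtain ⟨l, hl, h2⟩ := hrlast (List.cons_ne_nil a r)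
        exact ⟨l, by rwa [getLast?_cons_ne a hr] at hl, h2⟩
      have hslast' : s ≠ [] → ∃ l, s.getLast? = some l ∧ 2 ≤ l := by
        intro hs
        obtain ⟨l, hl, h2⟩ := hslast (List.cons_ne_nil b s)
        exact ⟨l, by rwa [getLast?_cons_ne b hs] at hl, h2⟩
      have hrpos' : ∀ m ∈ r, 0 < m := fun m hm => hrpos m (List.mem_cons_of_mem a hm)
      have hspos' : ∀ m ∈ s, 0 < m := fun m hm => hspos m (List.mem_cons_of_mem b hm)
      simp only [stuffles, List.mem_append, List.mem_map] at ht
      have simple : ∀ (c : ℕ) (t' : List ℕ), Valid t' → 0 < c → Valid (c :: t') := by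
        rintro c t' ⟨h1, h2, l, h3, h4⟩ hc
        refine ⟨List.cons_ne_nil c t', ?_, l, ?_, h4⟩
        · intro m hm
          rcases List.mem_cons.1 hm with h' | h'
          · omega
          · exact h2 m h'
        · rwa [getLast?_cons_ne c h1]
      rcases ht with (⟨t', ht', rfl⟩ | ⟨t', ht', rfl⟩) | ⟨t', ht', rfl⟩
      · refine simple a t' ?_ ha
        exact ih r (b :: s) (by simp at hlen ⊢; omega) hrpos' hspos hrlast' hslast
          (Or.inr (List.cons_ne_nil b s)) t' ht'
      · refine simple b t' ?_ hb
        exact ih (a :: r) s (by simp at hlen ⊢; omega) hrpos hspos' hrlast hslast'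
          (Or.inl (List.cons_ne_nil a r)) t' ht'
      · by_cases hrs : r = [] ∧ s = []
        · obtain ⟨h1, h2⟩ := hrs
          subst h1; subst h2
          simp only [stuffles, List.mem_singleton] at ht'
          subst ht'
          exact ⟨List.cons_ne_nil _ _, by intro m hm; simp at hm; omega,
            ⟨a + b, by simp, by omega⟩⟩
        · have hor' : r ≠ [] ∨ s ≠ [] := by tauto
          refine simple (a + b) t' ?_ (by omega)
          exact ih r s (by simp at hlen ⊢; omega) hrpos' hspos' hrlast' hslast' hor' t' ht'

lemma stuffles_valid {r s : List ℕ} (hr : Valid r) (hs : Valid s) :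
    ∀ t ∈ stuffles r s, Valid t :=
  stuffles_valid_aux (r.length + s.length) r s le_rfl hr.2.1 hs.2.1
    (fun _ => hr.2.2) (fun _ => hs.2.2) (Or.inl hr.1)

open Classical in
lemma mzv_eq_toReal (r : List ℕ) : mzv r = (ZE r 0).toReal := by
  rw [mzv, ZE_eq]
  have h1 : (∑' f : Fin r.length → ℕ,
      if (StrictMono f ∧ ∀ i, 0 < f i)
      then ∏ i, ((f i : ℝ≥0∞) ^ r.get i)⁻¹ else 0)
      = ∑' f : ↥{f : Fin r.length → ℕ | StrictMono f ∧ ∀ i, 0 < f i},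
          ∏ i, ((f.1 i : ℝ≥0∞) ^ r.get i)⁻¹ := by
    rw [tsum_subtype {f : Fin r.length → ℕ | StrictMono f ∧ ∀ i, 0 < f i}
      (fun f => ∏ i, ((f i : ℝ≥0∞) ^ r.get i)⁻¹)]
    refine tsum_congr fun f => ?_
    rw [Set.indicator_apply]
    by_cases h : StrictMono f ∧ ∀ i, 0 < f i
    · rw [if_pos h, if_pos (show f ∈ {f : Fin r.length → ℕ | StrictMono f ∧ ∀ i, 0 < f i} from h)]
    · rw [if_neg h, if_neg (show f ∉ {f : Fin r.length → ℕ | StrictMono f ∧ ∀ i, 0 < f i} from h)]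
  rw [h1, ENNReal.tsum_toReal_eq]
  · refine tsum_congr fun f => ?_
    rw [ENNReal.toReal_prod]
    refine Finset.prod_congr rfl fun i _ => ?_
    rw [ENNReal.toReal_inv, ENNReal.toReal_pow, ENNReal.toReal_natCast]
  · intro f
    refine ENNReal.prod_ne_top fun i _ => ?_
    rw [ENNReal.inv_ne_top]
    exact pow_ne_zero _ (Nat.cast_ne_zero.2 (Nat.pos_iff_ne_zero.1 (f.2.2 i)))

lemma list_sum_ne_top (l : List ℝ≥0∞) (h : ∀ x ∈ l, x ≠ ⊤) : l.sum ≠ ⊤ := by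
  induction l with
  | nil => simp
  | cons a l ih =>
    rw [List.sum_cons]
    exact ENNReal.add_ne_top.2 ⟨h a (List.mem_cons_self),
      ih fun x hx => h x (List.mem_cons_of_mem a hx)⟩

lemma list_sum_toReal (l : List ℝ≥0∞) (h : ∀ x ∈ l, x ≠ ⊤) :
    l.sum.toReal = (l.map ENNReal.toReal).sum := by
  induction l with
  | nil => simp
  | cons a l ih =>
    rw [List.sum_cons, List.map_cons, List.sum_cons,
      ENNReal.toReal_add (h a (List.mem_cons_self))
        (list_sum_ne_top l fun x hx => h x (List.mem_cons_of_mem a hx)),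
      ih fun x hx => h x (List.mem_cons_of_mem a hx)]

lemma ZE_valid_ne_top {t : List ℕ} (ht : Valid t) (n : ℕ) : ZE t n ≠ ⊤ :=
  ZE_ne_top t ht.2.1 ht.2.2 n

lemma mzv_mul {r s : List ℕ} (hr : Valid r) (hs : Valid s) :
    mzv r * mzv s = ((stuffles r s).map mzv).sum := by
  have h := ZE_stuffle_aux (r.length + s.length) r s le_rfl 0
  have hne : ∀ x ∈ (stuffles r s).map (fun t => ZE t 0), x ≠ ⊤ := by
    intro x hx
    obtain ⟨t, ht, rfl⟩ := List.mem_map.1 hx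
    exact ZE_valid_ne_top (stuffles_valid hr hs t ht) 0
  rw [mzv_eq_toReal r, mzv_eq_toReal s, ← ENNReal.toReal_mul, h,
    list_sum_toReal _ hne, List.map_map]
  congr 1
  refine List.map_congr_left fun t ht => ?_
  exact (mzv_eq_toReal t).symm

def eOne : ℕ ≃ {f : Fin 1 → ℕ // StrictMono f ∧ ∀ i, 0 < f i} where
  toFun := fun n => ⟨fun _ => n + 1, Subsingleton.strictMono _, fun _ => Nat.succ_pos n⟩
  invFun := fun f => f.1 0 - 1
  left_inv := fun n => by simp
  right_inv := fun f => by
    refine Subtype.ext (funext fun i => ?_)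
    have hi : i = 0 := Subsingleton.elim i 0
    subst hi
    exact Nat.succ_pred_eq_of_pos (f.2.2 0)

open Real in
lemma mzv_two : mzv [2] = π ^ 2 / 6 := by
  have h1 : mzv [2] = ∑' n : ℕ, (((n:ℝ) + 1) ^ 2)⁻¹ := by
    rw [mzv]
    show (∑' n : {f : Fin 1 → ℕ // StrictMono f ∧ ∀ i, 0 < f i},
      ∏ i : Fin 1, ((n.1 i : ℝ) ^ [2].get i)⁻¹) = _
    rw [← eOne.tsum_eq]
    refine tsum_congr fun n => ?_
    rw [Fin.prod_univ_one]
    show (((n + 1 : ℕ) : ℝ) ^ 2)⁻¹ = _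
    push_cast
    ring
  have h2 := hasSum_zeta_two
  have hsum := h2.summable
  have h3 : ∑' n : ℕ, (1:ℝ) / (n:ℝ) ^ 2 = π ^ 2 / 6 := h2.tsum_eq
  rw [Summable.tsum_eq_zero_add hsum] at h3
  simp only [Nat.cast_zero] at h3
  norm_num at h3
  rw [h1, ← h3]

lemma Zspan_one_mem : (1:ℝ) ∈ Zspan :=
  Submodule.subset_span (Or.inl rfl)

lemma Zspan_mzv_mem {t : List ℕ} (ht : Valid t) : mzv t ∈ Zspan :=
  Submodule.subset_span (Or.inr ⟨t, ht.1, ht.2.1, ht.2.2, rfl⟩)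

lemma Zspan_list_sum_mem (l : List ℝ) (h : ∀ x ∈ l, x ∈ Zspan) : l.sum ∈ Zspan := by
  induction l with
  | nil => simpa using Zspan.zero_mem
  | cons a l ih =>
    rw [List.sum_cons]
    exact Zspan.add_mem (h a (List.mem_cons_self))
      (ih fun x hx => h x (List.mem_cons_of_mem a hx))

lemma Zspan_mul_mem {x y : ℝ} (hx : x ∈ Zspan) (hy : y ∈ Zspan) : x * y ∈ Zspan := by
  have h : Zspan * Zspan ≤ Zspan := by
    rw [Zspan, Submodule.span_mul_span]
    refine Submodule.span_le.2 ?_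
    rintro z hz
    rw [Set.mem_mul] at hz
    obtain ⟨a, ha, b, hb, rfl⟩ := hz
    rcases ha with ha | ⟨r, hr1, hr2, hr3, rfl⟩
    · rcases ha
      rw [one_mul]
      exact SetLike.mem_coe.2 (Submodule.subset_span hb)
    · rcases hb with hb | ⟨s, hs1, hs2, hs3, rfl⟩
      · rcases hb
        rw [mul_one]
        exact SetLike.mem_coe.2 (Zspan_mzv_mem ⟨hr1, hr2, hr3⟩)
      · rw [mzv_mul ⟨hr1, hr2, hr3⟩ ⟨hs1, hs2, hs3⟩]
        refine SetLike.mem_coe.2 (Zspan_list_sum_mem _ fun x hx => ?_)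
        obtain ⟨t, ht, rfl⟩ := List.mem_map.1 hx
        exact Zspan_mzv_mem (stuffles_valid ⟨hr1, hr2, hr3⟩ ⟨hs1, hs2, hs3⟩ t ht)
  exact h (Submodule.mul_mem_mul hx hy)

lemma Zspan_rat_mem (q : ℚ) : (q:ℝ) ∈ Zspan := by
  have := Zspan.smul_mem q Zspan_one_mem
  rwa [Rat.smul_def, mul_one] at this

open Real in
lemma Zspan_pi_sq_mem : (π ^ 2 : ℝ) ∈ Zspan := by
  have h2 : Valid [2] := ⟨by simp, by simp, ⟨2, rfl, le_rfl⟩⟩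
  have := Zspan.smul_mem (6:ℚ) (Zspan_mzv_mem h2)
  rw [Rat.smul_def, mzv_two] at this
  norm_num at this
  convert this using 1
  ring

noncomputable def ZW : Subalgebra ℚ ℂ where
  carrier := {z : ℂ | ∃ x ∈ Zspan, ∃ y ∈ Zspan,
    z = (x : ℂ) + Complex.I * (Real.pi : ℂ) * (y : ℂ)}
  mul_mem' := by
    rintro p q ⟨x1, hx1, y1, hy1, rfl⟩ ⟨x2, hx2, y2, hy2, rfl⟩
    refine ⟨x1 * x2 - Real.pi ^ 2 * (y1 * y2),
      Zspan.sub_mem (Zspan_mul_mem hx1 hx2)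
        (Zspan_mul_mem Zspan_pi_sq_mem (Zspan_mul_mem hy1 hy2)),
      x1 * y2 + y1 * x2,
      Zspan.add_mem (Zspan_mul_mem hx1 hy2) (Zspan_mul_mem hy1 hx2), ?_⟩
    have hI : (Complex.I) ^ 2 = -1 := Complex.I_sq
    push_cast
    linear_combination ((Real.pi : ℂ) ^ 2 * (y1 : ℂ) * (y2 : ℂ)) * hI
  one_mem' := ⟨1, Zspan_one_mem, 0, Zspan.zero_mem, by push_cast; ring⟩
  add_mem' := by
    rintro p q ⟨x1, hx1, y1, hy1, rfl⟩ ⟨x2, hx2, y2, hy2, rfl⟩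
    exact ⟨x1 + x2, Zspan.add_mem hx1 hx2, y1 + y2, Zspan.add_mem hy1 hy2,
      by push_cast; ring⟩
  zero_mem' := ⟨0, Zspan.zero_mem, 0, Zspan.zero_mem, by push_cast; ring⟩
  algebraMap_mem' := fun q =>
    ⟨(q : ℝ), Zspan_rat_mem q, 0, Zspan.zero_mem, by
      rw [eq_ratCast (algebraMap ℚ ℂ) q]; push_cast; ring⟩

/-- `Z` is a subring of `ℝ`; the `ℚ`-subalgebra of `ℂ` generated by `Z` and `iπ`
equals `Z + iπZ`; and this sum is direct: `Z ∩ iπZ = {0}`. -/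
theorem statement19 :
    (∃ S : Subring ℝ, (S : Set ℝ) = (Zspan : Set ℝ)) ∧
    ((Algebra.adjoin ℚ
        (((fun x : ℝ => (x : ℂ)) '' (Zspan : Set ℝ)) ∪ {Complex.I * (Real.pi : ℂ)}) :
        Subalgebra ℚ ℂ) : Set ℂ)
      = {z : ℂ | ∃ x ∈ Zspan, ∃ y ∈ Zspan, z = (x : ℂ) + Complex.I * (Real.pi : ℂ) * (y : ℂ)} ∧
    (∀ x ∈ Zspan, ∀ y ∈ Zspan,
      (x : ℂ) = Complex.I * (Real.pi : ℂ) * (y : ℂ) → x = 0) := by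
  refine ⟨?_, ?_, ?_⟩
  · refine ⟨{ carrier := Zspan
              mul_mem' := fun hx hy => Zspan_mul_mem hx hy
              one_mem' := Zspan_one_mem
              add_mem' := fun hx hy => Zspan.add_mem hx hy
              zero_mem' := Zspan.zero_mem
              neg_mem' := fun hx => Zspan.neg_mem hx }, rfl⟩
  · refine Set.Subset.antisymm ?_ ?_
    · have hGen : (((fun x : ℝ => (x : ℂ)) '' (Zspan : Set ℝ)) ∪ {Complex.I * (Real.pi : ℂ)})
          ⊆ (ZW : Set ℂ) := by
        rintro z (⟨x, hx, rfl⟩ | rfl)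
        · exact ⟨x, hx, 0, Zspan.zero_mem, by push_cast; ring⟩
        · exact ⟨0, Zspan.zero_mem, 1, Zspan_one_mem, by push_cast; ring⟩
      have hle := Algebra.adjoin_le hGen
      exact fun z hz => hle hz
    · rintro z ⟨x, hx, y, hy, rfl⟩
      have h1 : (x:ℂ) ∈ Algebra.adjoin ℚ
          (((fun x : ℝ => (x : ℂ)) '' (Zspan : Set ℝ)) ∪ {Complex.I * (Real.pi : ℂ)}) :=
        Algebra.subset_adjoin (Or.inl ⟨x, hx, rfl⟩)
      have h2 : (y:ℂ) ∈ Algebra.adjoin ℚ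
          (((fun x : ℝ => (x : ℂ)) '' (Zspan : Set ℝ)) ∪ {Complex.I * (Real.pi : ℂ)}) :=
        Algebra.subset_adjoin (Or.inl ⟨y, hy, rfl⟩)
      have h3 : Complex.I * (Real.pi : ℂ) ∈ Algebra.adjoin ℚ
          (((fun x : ℝ => (x : ℂ)) '' (Zspan : Set ℝ)) ∪ {Complex.I * (Real.pi : ℂ)}) :=
        Algebra.subset_adjoin (Or.inr rfl)
      exact add_mem h1 (mul_mem h3 h2)
  · intro x hx y hy h
    have := congrArg Complex.re h
    simpa using this
end
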